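/- Define Y(z) = z·(32z² − (1+4z)^{3/2} + 12z + 1) / (6·(1+4z)^{5/2}·(√(1+4z)+1)) for real z ∈ (−1/4, 1/4). Then Y is real-analytic at 0, its Taylor coefficients at 0 of orders 0 and 1 vanish, and for every integer n ≥ 2 the n-th Taylor coefficient of Y at 0 (i.e. Y^{(n)}(0)/n!) equals ((−1)^n/6)·(2n−1)!/(n!·(n−2)!). -/

import Mathlib

/-- `Y(z) = z(32z² − (1+4z)^{3/2} + 12z + 1) / (6(1+4z)^{5/2}(√(1+4z)+1))`. -/
noncomputable def Yfun (z : ℝ) : ℝ :=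
  z * (32 * z ^ 2 - (1 + 4 * z) ^ ((3 : ℝ) / 2) + 12 * z + 1)
    / (6 * (1 + 4 * z) ^ ((5 : ℝ) / 2) * (Real.sqrt (1 + 4 * z) + 1))

/-- Auxiliary closed form: `Y(z) = 1/12 - (1/8)(1+4z)^{-1/2} + (1/24)(1+4z)^{-3/2}`. -/
noncomputable def Yg (z : ℝ) : ℝ :=
  1/12 - (1/8) * (1+4*z) ^ (-(1:ℝ)/2) + (1/24) * (1+4*z) ^ (-(3:ℝ)/2)

lemma Yfun_eq {z : ℝ} (hz : 0 < 1 + 4*z) : Yfun z = Yg z := by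
  have hle : (0:ℝ) ≤ 1 + 4*z := hz.le
  set u := Real.sqrt (1+4*z) with hu
  have hu0 : 0 < u := Real.sqrt_pos.mpr hz
  have hu2 : u^2 = 1+4*z := Real.sq_sqrt hle
  have h12 : (1+4*z) ^ ((1:ℝ)/2) = u := by
    rw [hu, Real.sqrt_eq_rpow]
  have h32 : (1+4*z) ^ ((3:ℝ)/2) = u^3 := by
    rw [show (3:ℝ)/2 = (1/2)*3 by norm_num, Real.rpow_mul hle, h12,
      show (3:ℝ) = ((3:ℕ):ℝ) by norm_num, Real.rpow_natCast]
  have h52 : (1+4*z) ^ ((5:ℝ)/2) = u^5 := by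
    rw [show (5:ℝ)/2 = (1/2)*5 by norm_num, Real.rpow_mul hle, h12,
      show (5:ℝ) = ((5:ℕ):ℝ) by norm_num, Real.rpow_natCast]
  have hn12 : (1+4*z) ^ (-(1:ℝ)/2) = u⁻¹ := by
    rw [show -(1:ℝ)/2 = -((1:ℝ)/2) by norm_num, Real.rpow_neg hle, h12]
  have hn32 : (1+4*z) ^ (-(3:ℝ)/2) = (u^3)⁻¹ := by
    rw [show -(3:ℝ)/2 = -((3:ℝ)/2) by norm_num, Real.rpow_neg hle, h32]
  have hz' : z = (u^2-1)/4 := by rw [hu2]; ring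
  rw [Yfun, Yg, h32, h52, hn12, hn32, hz']
  have h1 : u + 1 ≠ 0 := by positivity
  rw [show (1:ℝ) + 4 * ((u ^ 2 - 1) / 4) = u ^ 2 by ring, Real.sqrt_sq hu0.le]
  field_simp
  ring

noncomputable def coefA (n : ℕ) : ℝ := (-(1:ℝ)/8) * ∏ k ∈ Finset.range n, (4*(-(1:ℝ)/2 - k))
noncomputable def coefB (n : ℕ) : ℝ := ((1:ℝ)/24) * ∏ k ∈ Finset.range n, (4*(-(3:ℝ)/2 - k))

lemma iter_Yg (n : ℕ) : ∀ z : ℝ, 0 < 1 + 4*z →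
    iteratedDeriv n Yg z = (if n = 0 then (1:ℝ)/12 else 0)
      + coefA n * (1+4*z) ^ (-(1:ℝ)/2 - n) + coefB n * (1+4*z) ^ (-(3:ℝ)/2 - n) := by
  induction n with
  | zero =>
    intro z hz
    simp only [iteratedDeriv_zero, Yg, coefA, coefB, Finset.range_zero, Finset.prod_empty,
      Nat.cast_zero, sub_zero, if_pos rfl, mul_one, if_true]
    ring
  | succ n ih =>
    intro z hz
    have hopen : IsOpen {y : ℝ | 0 < 1 + 4*y} :=
      isOpen_lt continuous_const (by continuity)
    have hev : ∀ᶠ y in nhds z, 0 < 1 + 4*y := hopen.eventually_mem hz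
    have heq : iteratedDeriv n Yg =ᶠ[nhds z]
        (fun y => (if n = 0 then (1:ℝ)/12 else 0)
          + coefA n * (1+4*y) ^ (-(1:ℝ)/2 - n) + coefB n * (1+4*y) ^ (-(3:ℝ)/2 - n)) := by
      filter_upwards [hev] with y hy using ih y hy
    rw [iteratedDeriv_succ, heq.deriv_eq]
    have hbase : HasDerivAt (fun y : ℝ => 1+4*y) 4 z := by
      simpa using ((hasDerivAt_id z).const_mul (4:ℝ)).const_add 1
    have h1 : HasDerivAt (fun y : ℝ => (1+4*y) ^ (-(1:ℝ)/2 - n))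
        (4 * (-(1:ℝ)/2 - n) * (1+4*z) ^ ((-(1:ℝ)/2 - n) - 1)) z :=
      hbase.rpow_const (Or.inl hz.ne')
    have h2 : HasDerivAt (fun y : ℝ => (1+4*y) ^ (-(3:ℝ)/2 - n))
        (4 * (-(3:ℝ)/2 - n) * (1+4*z) ^ ((-(3:ℝ)/2 - n) - 1)) z :=
      hbase.rpow_const (Or.inl hz.ne')
    have H := (((h1.const_mul (coefA n)).const_add
        (if n = 0 then (1:ℝ)/12 else 0)).add (h2.const_mul (coefB n)))
    rw [(show HasDerivAt (fun y => (if n = 0 then (1:ℝ)/12 else 0)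
          + coefA n * (1+4*y) ^ (-(1:ℝ)/2 - n) + coefB n * (1+4*y) ^ (-(3:ℝ)/2 - n)) _ z
          from H).deriv]
    have e1 : (-(1:ℝ)/2 - n) - 1 = -(1:ℝ)/2 - ((n+1 : ℕ) : ℝ) := by push_cast; ring
    have e2 : (-(3:ℝ)/2 - n) - 1 = -(3:ℝ)/2 - ((n+1 : ℕ) : ℝ) := by push_cast; ring
    rw [e1, e2]
    simp only [coefA, coefB, Finset.prod_range_succ, if_neg (Nat.succ_ne_zero n)]
    ring

lemma iter_Yg0 (n : ℕ) :
    iteratedDeriv n Yg 0 = (if n = 0 then (1:ℝ)/12 else 0) + coefA n + coefB n := by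
  have h := iter_Yg n 0 (by norm_num)
  norm_num [Real.one_rpow] at h
  convert h using 2

noncomputable def Fc (w : ℂ) : ℂ :=
  1/12 - (1/8) * (1+4*w) ^ (-(1:ℂ)/2) + (1/24) * (1+4*w) ^ (-(3:ℂ)/2)

lemma analyticAt_Fc : AnalyticAt ℂ Fc 0 := by
  have hb : AnalyticAt ℂ (fun w : ℂ => 1+4*w) 0 :=
    analyticAt_const.add (analyticAt_const.mul analyticAt_id)
  have hm : (fun w : ℂ => 1+4*w) 0 ∈ Complex.slitPlane := by
    simp [Complex.mem_slitPlane_iff]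
  have h1 : AnalyticAt ℂ (fun w : ℂ => (1+4*w) ^ (-(1:ℂ)/2)) 0 :=
    hb.cpow analyticAt_const hm
  have h2 : AnalyticAt ℂ (fun w : ℂ => (1+4*w) ^ (-(3:ℂ)/2)) 0 :=
    hb.cpow analyticAt_const hm
  exact (analyticAt_const.sub (analyticAt_const.mul h1)).add (analyticAt_const.mul h2)

lemma Fc_re {z : ℝ} (hz : 0 < 1 + 4*z) : (Fc z).re = Yg z := by
  have hle : (0:ℝ) ≤ 1+4*z := hz.le
  have hFc : Fc z = ((Yg z : ℝ) : ℂ) := by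
    rw [Fc, Yg]
    rw [show ((1:ℂ)+4*(z:ℂ)) = ((1+4*z : ℝ) : ℂ) by push_cast; ring,
      show (-(1:ℂ)/2) = (((-(1:ℝ)/2 : ℝ)) : ℂ) by push_cast; ring,
      show (-(3:ℂ)/2) = (((-(3:ℝ)/2 : ℝ)) : ℂ) by push_cast; ring,
      ← Complex.ofReal_cpow hle, ← Complex.ofReal_cpow hle]
    push_cast
    ring
  rw [hFc, Complex.ofReal_re]

lemma analyticAt_Yg : AnalyticAt ℝ Yg 0 := by
  have h1 : AnalyticAt ℝ (fun z : ℝ => (Fc z).re) 0 := by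
    have ha : AnalyticAt ℝ Fc ((Complex.ofRealCLM : ℝ →L[ℝ] ℂ) 0) := by
      simpa using analyticAt_Fc.restrictScalars
    exact ((Complex.reCLM : ℂ →L[ℝ] ℝ).analyticAt _).comp
      (ha.comp ((Complex.ofRealCLM : ℝ →L[ℝ] ℂ).analyticAt 0))
  apply h1.congr
  have hopen : IsOpen {y : ℝ | 0 < 1 + 4*y} :=
    isOpen_lt continuous_const (by continuity)
  filter_upwards [hopen.eventually_mem (show (0:ℝ) ∈ {y : ℝ | 0 < 1+4*y} by norm_num)]
    with y hy using Fc_re hy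

lemma prodA (n : ℕ) : ∏ k ∈ Finset.range n, (4*(-(1:ℝ)/2 - k))
    = (-1)^n * ((2*n).factorial : ℝ) / (n.factorial : ℝ) := by
  induction n with
  | zero => simp
  | succ n ih =>
    have f1 : ((2*(n+1)).factorial : ℝ) = (2*n+2) * ((2*n+1) * ((2*n).factorial : ℝ)) := by
      rw [show 2*(n+1) = ((2*n)+1)+1 by ring, Nat.factorial_succ, Nat.factorial_succ]
      push_cast; ring
    have f2 : (((n+1)).factorial : ℝ) = (n+1) * (n.factorial : ℝ) := by
      rw [Nat.factorial_succ]; push_cast; ring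
    rw [Finset.prod_range_succ, ih, f1, f2]
    have h1 : ((n.factorial : ℝ)) ≠ 0 := Nat.cast_ne_zero.mpr n.factorial_ne_zero
    have h2 : ((n:ℝ)+1) ≠ 0 := by positivity
    push_cast
    field_simp
    ring

lemma prodB (n : ℕ) : ∏ k ∈ Finset.range n, (4*(-(3:ℝ)/2 - k))
    = (-1)^n * ((2*n+1).factorial : ℝ) / (n.factorial : ℝ) := by
  induction n with
  | zero => simp
  | succ n ih =>
    have f1 : ((2*(n+1)+1).factorial : ℝ) = (2*n+3) * ((2*n+2) * ((2*n+1).factorial : ℝ)) := by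
      rw [show 2*(n+1)+1 = ((2*n+1)+1)+1 by ring, Nat.factorial_succ, Nat.factorial_succ]
      push_cast; ring
    have f2 : (((n+1)).factorial : ℝ) = (n+1) * (n.factorial : ℝ) := by
      rw [Nat.factorial_succ]; push_cast; ring
    rw [Finset.prod_range_succ, ih, f1, f2]
    have h1 : ((n.factorial : ℝ)) ≠ 0 := Nat.cast_ne_zero.mpr n.factorial_ne_zero
    have h2 : ((n:ℝ)+1) ≠ 0 := by positivity
    push_cast
    field_simp
    ring

theorem taylor_coeff_Yfun :
    AnalyticAt ℝ Yfun 0 ∧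
    iteratedDeriv 0 Yfun 0 = 0 ∧
    iteratedDeriv 1 Yfun 0 = 0 ∧
    ∀ n : ℕ, 2 ≤ n →
      iteratedDeriv n Yfun 0 / (n.factorial : ℝ) =
        ((-1 : ℝ) ^ n / 6) * ((2 * n - 1).factorial : ℝ)
          / ((n.factorial : ℝ) * ((n - 2).factorial : ℝ)) := by
  have hopen : IsOpen {y : ℝ | 0 < 1 + 4*y} :=
    isOpen_lt continuous_const (by continuity)
  have hev0 : Yfun =ᶠ[nhds 0] Yg := by
    filter_upwards [hopen.eventually_mem (show (0:ℝ) ∈ {y : ℝ | 0 < 1+4*y} by norm_num)]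
      with y hy using Yfun_eq hy
  refine ⟨analyticAt_Yg.congr hev0.symm, ?_, ?_, ?_⟩
  · simp [iteratedDeriv_zero, Yfun]
  · rw [hev0.iteratedDeriv_eq 1, iter_Yg0]
    norm_num [coefA, coefB, Finset.prod_range_one]
  · intro n hn
    obtain ⟨m, rfl⟩ : ∃ m, n = m + 2 := ⟨n - 2, by omega⟩
    rw [hev0.iteratedDeriv_eq (m+2), iter_Yg0, if_neg (by omega)]
    simp only [coefA, coefB, prodA, prodB]
    have e1 : 2*(m+2) - 1 = 2*m+3 := by omega
    have e2 : (m+2) - 2 = m := by omega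
    have f1 : ((2*(m+2)).factorial : ℝ) = (2*m+4) * ((2*m+3).factorial : ℝ) := by
      rw [show 2*(m+2) = (2*m+3)+1 by ring, Nat.factorial_succ]; push_cast; ring
    have f2 : ((2*(m+2)+1).factorial : ℝ) = (2*m+5) * ((2*m+4) * ((2*m+3).factorial : ℝ)) := by
      rw [show 2*(m+2)+1 = ((2*m+3)+1)+1 by ring, Nat.factorial_succ, Nat.factorial_succ]
      push_cast; ring
    have f3 : (((m+2)).factorial : ℝ) = (m+2) * ((m+1) * (m.factorial : ℝ)) := by
      rw [show m+2 = (m+1)+1 from rfl, Nat.factorial_succ, Nat.factorial_succ]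
      push_cast; ring
    rw [e1, e2, f1, f2, f3]
    have h1 : ((m.factorial : ℝ)) ≠ 0 := Nat.cast_ne_zero.mpr m.factorial_ne_zero
    have h2 : ((m:ℝ)+2) ≠ 0 := by positivity
    have h3 : ((m:ℝ)+1) ≠ 0 := by positivity
    field_simp
    ring
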